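/- Let 1 ≤ d ≤ n be integers, H ⊂ ℝ^n a closed set, and K_0 ⊂ ℝ^n ∖ H a relatively closed countably H^d-rectifiable set. Then the class A(H,K_0) = {φ(K_0) : φ ∈ Σ(H)} is a good class in the sense of Definition of good classes; indeed D(x,r) ⊂ Σ(H) for every ball B_{x,r} ⊂ ℝ^n ∖ H. -/

import Mathlib

open MeasureTheory Metric Filter Set
open scoped ENNReal NNReal Topology RealInnerProductSpace

noncomputable section

/-- Euclidean space `ℝ^n`. -/
abbrev Euc (n : ℕ) : Type := EuclideanSpace ℝ (Fin n)

/-- A set is countably `H^d`-rectifiable if, up to an `H^d`-negligible set, it can be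
covered by countably many images of `C^1` maps from `ℝ^d`. -/
def CountablyRectifiable (d : ℕ) {n : ℕ} (K : Set (Euc n)) : Prop :=
  ∃ f : ℕ → (Euc d → Euc n), (∀ i, ContDiff ℝ 1 (f i)) ∧
    μH[(d : ℝ)] (K \ ⋃ i, Set.range (f i)) = 0

/-- A smooth diffeomorphism of `ℝ^n`. -/
def IsDiffeo {n : ℕ} (f : Euc n → Euc n) : Prop :=
  ContDiff ℝ (⊤ : ℕ∞) f ∧ ∃ g : Euc n → Euc n, ContDiff ℝ (⊤ : ℕ∞) g ∧
    Function.LeftInverse g f ∧ Function.RightInverse g f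

/-- The class `𝔇(x,r)`: maps equal to the identity outside `B(x,r)` which are smoothly
isotopic to the identity inside `B(x,r)`. -/
def IsotopyClass {n : ℕ} (x : Euc n) (r : ℝ) : Set (Euc n → Euc n) :=
  {φ | (∀ z ∉ ball x r, φ z = z) ∧
    ∃ lam : ℝ → Euc n → Euc n,
      ContDiff ℝ (⊤ : ℕ∞) (fun p : ℝ × Euc n => lam p.1 p.2) ∧
      lam 0 = id ∧ lam 1 = φ ∧
      (∀ t ∈ Icc (0 : ℝ) 1, ∀ z ∉ ball x r, lam t z = z) ∧
      (∀ t ∈ Icc (0 : ℝ) 1, IsDiffeo (lam t))}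

/-- The class `D(x,r)`: Lipschitz maps in the `C^0`-closure of `𝔇(x,r)`. -/
def DeformClass {n : ℕ} (x : Euc n) (r : ℝ) : Set (Euc n → Euc n) :=
  {φ | (∃ C : ℝ≥0, LipschitzWith C φ) ∧
    ∃ ψ : ℕ → (Euc n → Euc n), (∀ j, ψ j ∈ IsotopyClass x r) ∧
      TendstoUniformly ψ φ atTop}

/-- `K` is relatively closed in `U`. -/
def RelClosedIn {n : ℕ} (U K : Set (Euc n)) : Prop :=
  K ⊆ U ∧ ∃ F : Set (Euc n), IsClosed F ∧ K = F ∩ U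

/-- `inf { H^d(J) : J ∈ P, J ∖ cl B(x,r) = K ∖ cl B(x,r) }`. -/
def competInf (d : ℕ) {n : ℕ} (P : Set (Set (Euc n))) (K : Set (Euc n)) (x : Euc n)
    (r : ℝ) : ℝ≥0∞ :=
  sInf {m | ∃ J ∈ P, J \ closure (ball x r) = K \ closure (ball x r) ∧ m = μH[(d : ℝ)] J}

/-- A family `P` is a good class (for boundary `H`). -/
def IsGoodClass (d : ℕ) {n : ℕ} (H : Set (Euc n)) (P : Set (Set (Euc n))) : Prop :=
  ∀ K ∈ P, ∀ x ∈ K, ∀ᵐ r ∂(volume : Measure ℝ),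
    (0 < r ∧ ENNReal.ofReal r < EMetric.infEdist x H) →
      ∀ φ ∈ DeformClass x r, competInf d P K x r ≤ μH[(d : ℝ)] (φ '' K)

/-- The Plateau infimum `m₀ = inf {H^d(K) : K ∈ P}`. -/
def plateauInf (d : ℕ) {n : ℕ} (P : Set (Set (Euc n))) : ℝ≥0∞ := ⨅ K ∈ P, μH[(d : ℝ)] K

/-- A minimizing sequence: `H^d(K_j) ↓ m₀`. -/
def IsMinimizingSeq (d : ℕ) {n : ℕ} (P : Set (Set (Euc n))) (Kj : ℕ → Set (Euc n)) : Prop :=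
  (∀ j, Kj j ∈ P) ∧ Antitone (fun j => μH[(d : ℝ)] (Kj j)) ∧
    Tendsto (fun j => μH[(d : ℝ)] (Kj j)) atTop (𝓝 (plateauInf d P))

/-- The support of a measure. -/
def sptMeas {n : ℕ} (μ : Measure (Euc n)) : Set (Euc n) :=
  {x | ∀ r : ℝ, 0 < r → 0 < μ (ball x r)}

/-- Weak-* convergence of measures in the open set `U`. -/
def WeakStarOn {n : ℕ} (U : Set (Euc n)) (μs : ℕ → Measure (Euc n)) (μ : Measure (Euc n)) :
    Prop :=
  ∀ f : Euc n → ℝ, Continuous f → HasCompactSupport f → tsupport f ⊆ U →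
    Tendsto (fun j => ∫ z, f z ∂(μs j)) atTop (𝓝 (∫ z, f z ∂μ))

/-- The (multiplicity one) varifold associated to `K` is stationary in `U`: the first
variation of `H^d ⌐ K` along any compactly supported `C^1` vector field in `U` vanishes. -/
def StationaryIn (d : ℕ) {n : ℕ} (K U : Set (Euc n)) : Prop :=
  ∀ X : Euc n → Euc n, ContDiff ℝ 1 X → HasCompactSupport X → tsupport X ⊆ U →
    HasDerivAt (fun t : ℝ => (μH[(d : ℝ)] ((fun z => z + t • X z) '' K)).toReal) 0 0

/-- `S` is a `d`-dimensional real analytic submanifold of `ℝ^n`. -/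
def IsAnalyticSubmanifold (d : ℕ) {n : ℕ} (S : Set (Euc n)) : Prop :=
  ∀ x ∈ S, ∃ (U : Set (Euc n)) (V : Set (Euc d)) (f : Euc d → Euc n),
    IsOpen U ∧ x ∈ U ∧ IsOpen V ∧ AnalyticOnNhd ℝ f V ∧ Set.InjOn f V ∧
    (∀ y ∈ V, Function.Injective (fderiv ℝ f y)) ∧ f '' V = S ∩ U

/-- `ω_d`, the Lebesgue measure of the unit ball of `ℝ^d`. -/
def ballVol (d : ℕ) : ℝ≥0∞ := volume (ball (0 : Euc d) 1)

/-- The `d`-dimensional density of `μ` at `x` is `θ`. -/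
def HasDensityAt (d : ℕ) {n : ℕ} (μ : Measure (Euc n)) (x : Euc n) (θ : ℝ≥0∞) : Prop :=
  Tendsto (fun r : ℝ => μ (ball x r) / (ballVol d * ENNReal.ofReal r ^ d)) (𝓝[>] 0) (𝓝 θ)

/-- The blow-up `(K - x)/r`. -/
def blowup {n : ℕ} (x : Euc n) (r : ℝ) (K : Set (Euc n)) : Set (Euc n) :=
  (fun y => r⁻¹ • (y - x)) '' K

/-- `π` is the approximate tangent plane of `K` at `x`: `π` is a `d`-dimensional subspace and
`H^d ⌐ (K-x)/r` converges weakly-* to `H^d ⌐ π` as `r → 0⁺`. -/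
def HasApproxTangentPlane (d : ℕ) {n : ℕ} (K : Set (Euc n)) (x : Euc n) (π : Set (Euc n)) :
    Prop :=
  (∃ W : Submodule ℝ (Euc n), Module.finrank ℝ W = d ∧ π = (W : Set (Euc n))) ∧
  ∀ f : Euc n → ℝ, Continuous f → HasCompactSupport f →
    Tendsto (fun r : ℝ => ∫ z, f z ∂(μH[(d : ℝ)].restrict (blowup x r K))) (𝓝[>] 0)
      (𝓝 (∫ z, f z ∂(μH[(d : ℝ)].restrict π)))

/-- The sphere `S^m`, realized as the unit sphere of `ℝ^{m+1}`. -/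
def sph (m : ℕ) : Set (Euc (m + 1)) := sphere 0 1

/-- A smooth embedding of `S^{n-d}` into `ℝ^n ∖ H` (given by a smooth ambient map which is
injective and immersive on the sphere, with image avoiding `H`). -/
def IsEmbeddedSphere (n d : ℕ) (H : Set (Euc n)) (γ : Euc (n - d + 1) → Euc n) : Prop :=
  ContDiff ℝ (⊤ : ℕ∞) γ ∧ Set.InjOn γ (sph (n - d)) ∧
  (∀ y ∈ sph (n - d), ∀ v : Euc (n - d + 1), ⟪v, y⟫ = (0 : ℝ) → fderiv ℝ γ y v = 0 → v = 0) ∧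
  γ '' sph (n - d) ⊆ Hᶜ

/-- `γ` and `γ'` are smoothly isotopic embeddings of `S^{n-d}` in `ℝ^n ∖ H`. -/
def SphereIsotopic (n d : ℕ) (H : Set (Euc n)) (γ γ' : Euc (n - d + 1) → Euc n) : Prop :=
  ∃ Γ : ℝ → Euc (n - d + 1) → Euc n,
    ContDiff ℝ (⊤ : ℕ∞) (fun p : ℝ × Euc (n - d + 1) => Γ p.1 p.2) ∧
    Set.EqOn (Γ 0) γ (sph (n - d)) ∧ Set.EqOn (Γ 1) γ' (sph (n - d)) ∧
    ∀ t ∈ Icc (0 : ℝ) 1, IsEmbeddedSphere n d H (Γ t)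

/-- `C` is a family of smooth embeddings of `S^{n-d}` into `ℝ^n ∖ H` closed by isotopy. -/
def ClosedByIsotopy (n d : ℕ) (H : Set (Euc n)) (C : Set (Euc (n - d + 1) → Euc n)) : Prop :=
  (∀ γ ∈ C, IsEmbeddedSphere n d H γ) ∧
  ∀ γ ∈ C, ∀ γ' : Euc (n - d + 1) → Euc n,
    IsEmbeddedSphere n d H γ' → SphereIsotopic n d H γ γ' → γ' ∈ C

/-- `K` is a `C`-spanning set of `H`. -/
def IsSpanning (n d : ℕ) (C : Set (Euc (n - d + 1) → Euc n)) (K : Set (Euc n)) : Prop :=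
  ∀ γ ∈ C, (K ∩ γ '' sph (n - d)).Nonempty

/-- `F(H,C)`: the countably `H^d`-rectifiable relatively closed `C`-spanning sets of `H`. -/
def spanningClass (n d : ℕ) (H : Set (Euc n)) (C : Set (Euc (n - d + 1) → Euc n)) :
    Set (Set (Euc n)) :=
  {K | RelClosedIn Hᶜ K ∧ CountablyRectifiable d K ∧ IsSpanning n d C K}

/-- `Σ(H)`: Lipschitz maps homotopic to the identity through maps preserving `H`. -/
def SlidingMaps {n : ℕ} (H : Set (Euc n)) : Set (Euc n → Euc n) :=
  {φ | (∃ C : ℝ≥0, LipschitzWith C φ) ∧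
    ∃ Φ : ℝ → Euc n → Euc n, Continuous (fun p : ℝ × Euc n => Φ p.1 p.2) ∧
      Φ 0 = id ∧ Φ 1 = φ ∧ ∀ t ∈ Icc (0 : ℝ) 1, Φ t '' H ⊆ H}

/-- `A(H,K₀) = {φ(K₀) : φ ∈ Σ(H)}`. -/
def slidingClass {n : ℕ} (H K0 : Set (Euc n)) : Set (Set (Euc n)) :=
  {K | ∃ φ ∈ SlidingMaps H, K = φ '' K0}

/-- The cone competitor for `K` in `B(x,r)`. -/
def coneCompetitor {n : ℕ} (x : Euc n) (r : ℝ) (K : Set (Euc n)) : Set (Euc n) :=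
  (K \ ball x r) ∪
    {w | ∃ z ∈ K ∩ sphere x r, ∃ lam ∈ Icc (0 : ℝ) 1, w = lam • x + (1 - lam) • z}

/-- **Remark 1.8.** For every relatively closed countably `H^d`-rectifiable
`K₀ ⊆ ℝ^n ∖ H`, the class `A(H,K₀)` is a good class; indeed `D(x,r) ⊆ Σ(H)` for every
ball `B(x,r) ⊆ ℝ^n ∖ H`. -/
theorem statement3 {n d : ℕ} (hd1 : 1 ≤ d) (hdn : d ≤ n)
    (H : Set (Euc n)) (hH : IsClosed H)
    (K0 : Set (Euc n)) (hK0 : RelClosedIn Hᶜ K0) (hrect : CountablyRectifiable d K0) :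
    IsGoodClass d H (slidingClass H K0) ∧
    ∀ (x : Euc n) (r : ℝ), ball x r ⊆ Hᶜ → DeformClass x r ⊆ SlidingMaps H := by
  -- basic facts about elements of `DeformClass x r`
  have hfix : ∀ (x : Euc n) (r : ℝ), ∀ φ ∈ DeformClass x r, ∀ z ∉ ball x r, φ z = z := by
    intro x r φ hφ z hz
    obtain ⟨-, ψ, hψ, hconv⟩ := hφ
    have h1 : Tendsto (fun j => ψ j z) atTop (𝓝 (φ z)) := hconv.tendsto_at z
    have h2 : (fun j => ψ j z) = fun _ => z := funext fun j => (hψ j).1 z hz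
    rw [h2] at h1
    exact (tendsto_nhds_unique h1 tendsto_const_nhds)
  have hcl : ∀ (x : Euc n) (r : ℝ), ∀ φ ∈ DeformClass x r, ∀ z ∈ ball x r,
      φ z ∈ closure (ball x r) := by
    intro x r φ hφ z hz
    obtain ⟨-, ψ, hψ, hconv⟩ := hφ
    have hmem : ∀ j, ψ j z ∈ ball x r := by
      intro j
      obtain ⟨hout, lam, -, -, h1', -, hdif⟩ := hψ j
      have hd := hdif 1 ⟨zero_le_one, le_refl 1⟩
      rw [h1'] at hd
      obtain ⟨-, g, -, hg, -⟩ := hd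
      by_contra h
      have h3 : ψ j (ψ j z) = ψ j z := hout (ψ j z) h
      have h4 : ψ j z = z := hg.injective h3
      exact h (by rw [h4]; exact hz)
    exact isClosed_closure.mem_of_tendsto (hconv.tendsto_at z)
      (Filter.Eventually.of_forall fun j => subset_closure (hmem j))
  have key : ∀ (x : Euc n) (r : ℝ), ball x r ⊆ Hᶜ → DeformClass x r ⊆ SlidingMaps H := by
    intro x r hball φ hφ
    have hlip := hφ.1
    refine ⟨hlip, fun t z => z + t • (φ z - z), ?_, ?_, ?_, ?_⟩
    · obtain ⟨C, hC⟩ := hlip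
      exact continuous_snd.add (continuous_fst.smul
        ((hC.continuous.comp continuous_snd).sub continuous_snd))
    · funext z; simp
    · funext z; simp
    · intro t ht
      rintro w ⟨z, hzH, rfl⟩
      have hz : z ∉ ball x r := fun h => (hball h) hzH
      show z + t • (φ z - z) ∈ H
      rw [hfix x r φ hφ z hz]
      simpa using hzH
  refine ⟨?_, key⟩
  rintro K ⟨ψ0, hψ0, rfl⟩ x hx
  filter_upwards with r hr φ hφ
  obtain ⟨hr0, hrH⟩ := hr
  have hball : ball x r ⊆ Hᶜ := by
    intro z hz hzH
    have h1 : EMetric.infEdist x H ≤ edist x z := EMetric.infEdist_le_edist_of_mem hzH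
    have h2 : edist x z < ENNReal.ofReal r := by
      rw [edist_dist]
      exact (ENNReal.ofReal_lt_ofReal_iff hr0).2 (by simpa [dist_comm] using hz)
    exact absurd (h1.trans_lt h2) (not_lt.2 hrH.le)
  have hφS : φ ∈ SlidingMaps H := key x r hball hφ
  -- composition φ ∘ ψ0 is a sliding map
  obtain ⟨⟨C1, h1⟩, Φ, hΦc, hΦ0, hΦ1, hΦH⟩ := hφS
  obtain ⟨⟨C2, h2⟩, Ψ, hΨc, hΨ0, hΨ1, hΨH⟩ := hψ0
  have hcomp : (φ ∘ ψ0) ∈ SlidingMaps H := by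
    refine ⟨⟨C1 * C2, h1.comp h2⟩, fun t z => Φ t (Ψ t z), ?_, ?_, ?_, ?_⟩
    · exact hΦc.comp (continuous_fst.prodMk hΨc)
    · funext z; show Φ 0 (Ψ 0 z) = id z; rw [hΨ0, hΦ0]; rfl
    · funext z; show Φ 1 (Ψ 1 z) = (φ ∘ ψ0) z; rw [hΨ1, hΦ1]; rfl
    · intro t ht
      have : (fun z => Φ t (Ψ t z)) '' H = Φ t '' (Ψ t '' H) := by
        rw [← Set.image_comp]; rfl
      rw [this]
      exact (Set.image_mono (hΨH t ht)).trans (hΦH t ht)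
  -- the image is a competitor
  have heq : (φ '' (ψ0 '' K0)) \ closure (ball x r) = (ψ0 '' K0) \ closure (ball x r) := by
    ext w
    constructor
    · rintro ⟨⟨z, hzK, rfl⟩, hw⟩
      have hz : z ∉ ball x r := fun h => hw (hcl x r φ hφ z h)
      rw [hfix x r φ hφ z hz]
      exact ⟨hzK, by rwa [hfix x r φ hφ z hz] at hw⟩
    · rintro ⟨hwK, hw⟩
      have hz : w ∉ ball x r := fun h => hw (subset_closure h)
      exact ⟨⟨w, hwK, hfix x r φ hφ w hz⟩, hw⟩
  refine sInf_le ⟨φ '' (ψ0 '' K0), ⟨φ ∘ ψ0, hcomp, ?_⟩, heq, rfl⟩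
  rw [Set.image_comp]
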